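/- Let X be a shift space. (1) X has the specification property if and only if there exists N ∈ ℕ such that for every left ray x⁻ of X and every u ∈ B(X) there exists w ∈ B_N(X) such that the left-infinite sequence x⁻wu is a left ray of X. (2) X is almost specified if and only if there exists N ∈ ℕ such that for every left ray x⁻ of X and every u ∈ B(X) there exists a word w with |w| ≤ N such that the left-infinite sequence x⁻wu is a left ray of X. -/

import Mathlib

open Set Filter

/-- The product topology on `ℤ → A`, where the alphabet `A` carries the
discrete topology. -/
def seqTop (A : Type*) : TopologicalSpace (ℤ → A) :=
  @Pi.topologicalSpace ℤ (fun _ => A) (fun _ => ⊥)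

/-- The shift map `σ`, defined by `σ(x)_i = x_{i+1}`. -/
def shiftMap {A : Type*} (x : ℤ → A) : ℤ → A := fun i => x (i + 1)

/-- A shift space: a nonempty, closed, shift-invariant subset of `A^ℤ`. -/
def IsShiftSpace {A : Type*} (X : Set (ℤ → A)) : Prop :=
  X.Nonempty ∧ @IsClosed _ (seqTop A) X ∧ shiftMap '' X = X

/-- The word `u` occurs in `x` at coordinate `i`. -/
def OccursAt {A : Type*} (x : ℤ → A) (u : List A) (i : ℤ) : Prop :=
  ∀ k : Fin u.length, x (i + ((k : ℕ) : ℤ)) = u.get k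

/-- `u` is a word of the language `B(X)` of `X`. -/
def IsWordOf {A : Type*} (X : Set (ℤ → A)) (u : List A) : Prop :=
  ∃ x ∈ X, OccursAt x u 0

/-- A shift of finite type: a shift space defined by finitely many
forbidden words. -/
def IsSFT {A : Type*} (X : Set (ℤ → A)) : Prop :=
  IsShiftSpace X ∧ ∃ F : Finset (List A),
    X = { x | ∀ u ∈ F, ∀ i : ℤ, ¬ OccursAt x u i }

/-- A code: a continuous shift-commuting map from `X` to `Y`. -/
def IsCode {A B : Type*} (X : Set (ℤ → A)) (Y : Set (ℤ → B))
    (φ : (ℤ → A) → (ℤ → B)) : Prop :=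
  Set.MapsTo φ X Y ∧ @ContinuousOn _ _ (seqTop A) (seqTop B) φ X ∧
    ∀ x ∈ X, φ (shiftMap x) = shiftMap (φ x)

/-- A factor code: a surjective code. -/
def IsFactorCode {A B : Type*} (X : Set (ℤ → A)) (Y : Set (ℤ → B))
    (φ : (ℤ → A) → (ℤ → B)) : Prop :=
  IsCode X Y φ ∧ Y ⊆ φ '' X

/-- A code is open if it maps (relatively) open subsets of `X` to
(relatively) open subsets of `Y`. -/
def IsOpenCode {A B : Type*} (X : Set (ℤ → A)) (Y : Set (ℤ → B))
    (φ : (ℤ → A) → (ℤ → B)) : Prop :=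
  ∀ U : Set (ℤ → A), @IsOpen _ (seqTop A) U →
    ∃ V : Set (ℤ → B), @IsOpen _ (seqTop B) V ∧ φ '' (X ∩ U) = Y ∩ V

/-- A code has a uniform lifting length `l`. -/
def HasUniformLiftingLength {A B : Type*} (X : Set (ℤ → A)) (Y : Set (ℤ → B))
    (φ : (ℤ → A) → (ℤ → B)) : Prop :=
  ∃ l : ℕ, ∀ k : ℕ, ∀ x ∈ X, ∀ y ∈ Y,
    (∀ i : ℤ, |i| ≤ (k : ℤ) + (l : ℤ) → φ x i = y i) →
    ∃ x' ∈ X, (∀ i : ℤ, |i| ≤ (k : ℤ) → x' i = x i) ∧ φ x' = y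

/-- Right continuing code. -/
def IsRightContinuing {A B : Type*} (X : Set (ℤ → A)) (Y : Set (ℤ → B))
    (φ : (ℤ → A) → (ℤ → B)) : Prop :=
  ∀ x ∈ X, ∀ y ∈ Y, (∃ M : ℤ, ∀ i ≤ M, φ x i = y i) →
    ∃ x' ∈ X, (∃ M : ℤ, ∀ i ≤ M, x' i = x i) ∧ φ x' = y

/-- Left continuing code. -/
def IsLeftContinuing {A B : Type*} (X : Set (ℤ → A)) (Y : Set (ℤ → B))
    (φ : (ℤ → A) → (ℤ → B)) : Prop :=
  ∀ x ∈ X, ∀ y ∈ Y, (∃ M : ℤ, ∀ i, M ≤ i → φ x i = y i) →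
    ∃ x' ∈ X, (∃ M : ℤ, ∀ i, M ≤ i → x' i = x i) ∧ φ x' = y

/-- `n` is a right continuing retract of `φ`. -/
def IsRightRetract {A B : Type*} (X : Set (ℤ → A)) (Y : Set (ℤ → B))
    (φ : (ℤ → A) → (ℤ → B)) (n : ℕ) : Prop :=
  ∀ x ∈ X, ∀ y ∈ Y, (∀ i : ℤ, i ≤ 0 → φ x i = y i) →
    ∃ x' ∈ X, φ x' = y ∧ ∀ i : ℤ, i ≤ -(n : ℤ) → x' i = x i

/-- `n` is a left continuing retract of `φ`. -/
def IsLeftRetract {A B : Type*} (X : Set (ℤ → A)) (Y : Set (ℤ → B))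
    (φ : (ℤ → A) → (ℤ → B)) (n : ℕ) : Prop :=
  ∀ x ∈ X, ∀ y ∈ Y, (∀ i : ℤ, 0 ≤ i → φ x i = y i) →
    ∃ x' ∈ X, φ x' = y ∧ ∀ i : ℤ, (n : ℤ) ≤ i → x' i = x i

/-- Right closing code. -/
def IsRightClosing {A B : Type*} (X : Set (ℤ → A))
    (φ : (ℤ → A) → (ℤ → B)) : Prop :=
  ∀ x ∈ X, ∀ x' ∈ X, (∃ M : ℤ, ∀ i ≤ M, x i = x' i) → φ x = φ x' → x = x'

/-- Left closing code. -/
def IsLeftClosing {A B : Type*} (X : Set (ℤ → A))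
    (φ : (ℤ → A) → (ℤ → B)) : Prop :=
  ∀ x ∈ X, ∀ x' ∈ X, (∃ M : ℤ, ∀ i, M ≤ i → x i = x' i) → φ x = φ x' → x = x'

/-- A sofic shift: a factor of a shift of finite type. -/
def IsSofic {B : Type*} (Y : Set (ℤ → B)) : Prop :=
  ∃ (C : Type) (_ : Fintype C) (Z : Set (ℤ → C)) (π : (ℤ → C) → (ℤ → B)),
    IsSFT Z ∧ IsFactorCode Z Y π

/-- Irreducibility of a shift space. -/
def IsIrreducibleShift {A : Type*} (X : Set (ℤ → A)) : Prop :=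
  ∀ u v : List A, IsWordOf X u → IsWordOf X v →
    ∃ w : List A, IsWordOf X (u ++ w ++ v)

/-- Mixing shift space. -/
def IsMixingShift {A : Type*} (X : Set (ℤ → A)) : Prop :=
  ∀ u v : List A, IsWordOf X u → IsWordOf X v →
    ∃ N : ℕ, ∀ n : ℕ, N ≤ n →
      ∃ w : List A, w.length = n ∧ IsWordOf X (u ++ w ++ v)

/-- The almost specification property. -/
def AlmostSpecified {A : Type*} (X : Set (ℤ → A)) : Prop :=
  ∃ N : ℕ, ∀ u v : List A, IsWordOf X u → IsWordOf X v →
    ∃ w : List A, w.length ≤ N ∧ IsWordOf X (u ++ w ++ v)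

/-- The specification property. -/
def HasSpecification {A : Type*} (X : Set (ℤ → A)) : Prop :=
  ∃ N : ℕ, ∀ u v : List A, IsWordOf X u → IsWordOf X v →
    ∃ w : List A, w.length = N ∧ IsWordOf X (u ++ w ++ v)

/-- A synchronizing word of `X`. -/
def IsSynchronizingWord {A : Type*} (X : Set (ℤ → A)) (v : List A) : Prop :=
  IsWordOf X v ∧ ∀ u w : List A, IsWordOf X (u ++ v) → IsWordOf X (v ++ w) →
    IsWordOf X (u ++ v ++ w)

/-- A synchronized system: an irreducible shift space with a synchronizing
word. -/
def IsSynchronizedSystem {A : Type*} (X : Set (ℤ → A)) : Prop :=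
  IsIrreducibleShift X ∧ ∃ v : List A, IsSynchronizingWord X v

/-- A subshift of `X`. -/
def IsSubshiftOf {A : Type*} (X' X : Set (ℤ → A)) : Prop :=
  IsShiftSpace X' ∧ X' ⊆ X

/-- The number of words of length `n` in the language of `X`. -/
noncomputable def wordCount {A : Type*} (X : Set (ℤ → A)) (n : ℕ) : ℕ :=
  Set.ncard { u : List A | u.length = n ∧ IsWordOf X u }

/-- The entropy `h(X) = lim (1/n) log |B_n(X)|` of a shift space (the limit
exists by subadditivity, hence equals the limsup used here). -/
noncomputable def entropy {A : Type*} (X : Set (ℤ → A)) : ℝ :=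
  Filter.limsup (fun n : ℕ => Real.log (wordCount X n) / (n : ℝ)) Filter.atTop

/-- The periodic condition `P(X) ↘ P(Y)`. -/
def PeriodicCondition {A B : Type*} (X : Set (ℤ → A)) (Y : Set (ℤ → B)) : Prop :=
  ∀ n : ℕ, 0 < n → (∃ x ∈ X, shiftMap^[n] x = x) → ∃ y ∈ Y, shiftMap^[n] y = y

/-- A cyclic cover `D_0, …, D_{p-1}` of a shift space `X`. -/
def IsCyclicCover {A : Type*} (X : Set (ℤ → A)) (p : ℕ)
    (D : ZMod p → Set (ℤ → A)) : Prop :=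
  0 < p ∧
  (∀ i, @IsClosed _ (seqTop A) (D i) ∧ D i ⊆ X) ∧
  (⋃ i, D i) = X ∧
  (∀ i, shiftMap '' D i = D (i + 1)) ∧
  (∀ i, ∀ U V : Set (ℤ → A), @IsOpen _ (seqTop A) U → @IsOpen _ (seqTop A) V →
    (D i ∩ U).Nonempty → (D i ∩ V).Nonempty →
    ∃ N : ℕ, ∀ n : ℕ, N ≤ n →
      ((shiftMap^[p * n] '' (D i ∩ U)) ∩ (D i ∩ V)).Nonempty) ∧
  (∀ i j, i ≠ j → ∀ U : Set (ℤ → A), @IsOpen _ (seqTop A) U →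
    X ∩ U ⊆ D i ∩ D j → X ∩ U = ∅)

/-- A left ray of `X`, recorded as `z : ℕ → A` where `z n` is the symbol at
coordinate `-(n+1)`. -/
def IsLeftRay {A : Type*} (X : Set (ℤ → A)) (z : ℕ → A) : Prop :=
  ∃ x ∈ X, ∀ n : ℕ, x (-((n : ℤ) + 1)) = z n

/-- Append the finite word `w` on the right of a left-infinite sequence `z`
(the last symbol of `w` ends up at coordinate `-1`). -/
def rayAppend {A : Type*} (z : ℕ → A) (w : List A) : ℕ → A :=
  fun n => if h : n < w.length then w.reverse.get ⟨n, by simpa using h⟩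
           else z (n - w.length)

/-- A left transitive point: every word of `X` occurs in `x_{(-∞,0]}`. -/
def IsLeftTransitive {A : Type*} (X : Set (ℤ → A)) (x : ℤ → A) : Prop :=
  ∀ u : List A, IsWordOf X u → ∃ i : ℤ, i + (u.length : ℤ) ≤ 1 ∧ OccursAt x u i

/-- A right transitive point: every word of `X` occurs in `x_{[0,∞)}`. -/
def IsRightTransitive {A : Type*} (X : Set (ℤ → A)) (x : ℤ → A) : Prop :=
  ∀ u : List A, IsWordOf X u → ∃ i : ℤ, 0 ≤ i ∧ OccursAt x u i

/-- Right continuing almost everywhere. -/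
def IsRightContinuingAE {A B : Type*} (X : Set (ℤ → A)) (Y : Set (ℤ → B))
    (φ : (ℤ → A) → (ℤ → B)) : Prop :=
  ∀ x ∈ X, IsLeftTransitive X x → ∀ y ∈ Y, (∃ M : ℤ, ∀ i ≤ M, φ x i = y i) →
    ∃ x' ∈ X, (∃ M : ℤ, ∀ i ≤ M, x' i = x i) ∧ φ x' = y

/-- Left continuing almost everywhere. -/
def IsLeftContinuingAE {A B : Type*} (X : Set (ℤ → A)) (Y : Set (ℤ → B))
    (φ : (ℤ → A) → (ℤ → B)) : Prop :=
  ∀ x ∈ X, IsRightTransitive X x → ∀ y ∈ Y, (∃ M : ℤ, ∀ i, M ≤ i → φ x i = y i) →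
    ∃ x' ∈ X, (∃ M : ℤ, ∀ i, M ≤ i → x' i = x i) ∧ φ x' = y

/-- The bi-infinite concatenations of blocks `1 0^s`, `s ∈ S`: the positions of
`1`s in `x` form the range of a strictly monotone `t : ℤ → ℤ` whose
consecutive gaps `t (n+1) - t n` all equal `s + 1` for some `s ∈ S`. -/
def GapConcat (S : Set ℕ) : Set (ℤ → Bool) :=
  { x | ∃ t : ℤ → ℤ, StrictMono t ∧ (∀ n : ℤ, ∃ s ∈ S, t (n + 1) = t n + (s : ℤ) + 1) ∧
      (∀ i : ℤ, x i = true ↔ ∃ n : ℤ, t n = i) }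

/-- The `S`-gap shift: the smallest shift space over `{0,1}` containing all
bi-infinite concatenations of blocks from `{1 0^s : s ∈ S}`. -/
def SGapShift (S : Set ℕ) : Set (ℤ → Bool) :=
  ⋂₀ { X : Set (ℤ → Bool) | IsShiftSpace X ∧ GapConcat S ⊆ X }

section Aux
variable {A : Type*}

lemma translate_mem {X : Set (ℤ → A)} (hσ : shiftMap '' X = X)
    (m : ℤ) : ∀ {x : ℤ → A}, x ∈ X → (fun i => x (i + m)) ∈ X := by
  induction m using Int.induction_on with
  | zero => intro x hx; simpa using hx
  | succ k ih =>
      intro x hx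
      have h1 : (fun i => x (i + (k : ℤ))) ∈ X := ih hx
      have h2 : shiftMap (fun i => x (i + (k : ℤ))) ∈ X := by
        rw [← hσ]; exact ⟨_, h1, rfl⟩
      have h3 : shiftMap (fun i => x (i + (k : ℤ))) = fun i => x (i + ((k : ℤ) + 1)) := by
        funext i; show x (i + 1 + k) = x (i + (k + 1)); congr 1; ring
      rwa [h3] at h2
  | pred k ih =>
      intro x hx
      have h1 : (fun i => x (i + (-(k : ℤ)))) ∈ X := ih hx
      rw [← hσ] at h1
      obtain ⟨y, hy, hyx⟩ := h1
      have h3 : (fun i => x (i + (-(k : ℤ) - 1))) = y := by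
        funext i
        have h := congrFun hyx (i - 1)
        show x (i + (-(k : ℤ) - 1)) = y i
        simp only [shiftMap] at h
        rw [sub_add_cancel] at h
        rw [h]; congr 1; ring
      rw [h3]; exact hy

lemma occursAt_shift {x : ℤ → A} {u : List A} {i : ℤ} (h : OccursAt x u i) :
    OccursAt (fun j => x (j + i)) u 0 := by
  intro k
  show x (0 + (k : ℕ) + i) = u.get k
  rw [show (0 : ℤ) + (k : ℕ) + i = i + (k : ℕ) by ring]
  exact h k

lemma isWordOf_of_occursAt {X : Set (ℤ → A)} (hσ : shiftMap '' X = X)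
    {x : ℤ → A} (hx : x ∈ X) {u : List A} {i : ℤ} (h : OccursAt x u i) :
    IsWordOf X u :=
  ⟨_, translate_mem hσ i hx, occursAt_shift h⟩

lemma exists_point_of_finite_approx [Fintype A] {X : Set (ℤ → A)}
    (hcl : @IsClosed _ (seqTop A) X) (r : ℕ → A)
    (h : ∀ n : ℕ, ∃ x ∈ X, ∀ m < n, x (-((m : ℤ) + 1)) = r m) :
    ∃ x ∈ X, ∀ m : ℕ, x (-((m : ℤ) + 1)) = r m := by
  letI : TopologicalSpace A := ⊥
  haveI : DiscreteTopology A := ⟨rfl⟩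
  have hcl' : IsClosed X := hcl
  set C : ℕ → Set (ℤ → A) :=
    fun n => X ∩ ⋂ m : ℕ, ⋂ (_ : m < n), {x | x (-((m : ℤ) + 1)) = r m} with hC
  have hmem : ∀ n x, x ∈ C n ↔ x ∈ X ∧ ∀ m < n, x (-((m : ℤ) + 1)) = r m := by
    intro n x; simp [hC, Set.mem_iInter]
  have hclosed : ∀ n, IsClosed (C n) := by
    intro n
    refine hcl'.inter (isClosed_iInter fun m => isClosed_iInter fun _ => ?_)
    exact isClosed_eq (continuous_apply _) continuous_const
  have hsub : ∀ n, C (n + 1) ⊆ C n := by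
    intro n x hx
    rw [hmem] at hx ⊢
    exact ⟨hx.1, fun m hm => hx.2 m (Nat.lt_succ_of_lt hm)⟩
  have hne : ∀ n, (C n).Nonempty := by
    intro n
    obtain ⟨x, hx, hxr⟩ := h n
    exact ⟨x, (hmem n x).2 ⟨hx, hxr⟩⟩
  obtain ⟨x, hx⟩ := IsCompact.nonempty_iInter_of_sequence_nonempty_isCompact_isClosed
    C hsub hne ((hclosed 0).isCompact) hclosed
  simp only [Set.mem_iInter] at hx
  refine ⟨x, ((hmem 0 x).1 (hx 0)).1, fun m => ?_⟩
  exact ((hmem (m + 1) x).1 (hx (m + 1))).2 m (Nat.lt_succ_self m)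

lemma rayAppend_rayAppend (z : ℕ → A) (w u : List A) :
    rayAppend (rayAppend z w) u = rayAppend z (w ++ u) := by
  funext n
  simp only [rayAppend, List.length_append, List.get_eq_getElem, List.reverse_append]
  by_cases h1 : n < u.length
  · rw [dif_pos h1, dif_pos (by omega)]
    rw [List.getElem_append_left (by simpa using h1)]
  · by_cases h2 : n < w.length + u.length
    · rw [dif_neg h1, dif_pos h2, dif_pos (by omega),
        List.getElem_append_right (by simpa using not_lt.mp h1)]
      simp
    · rw [dif_neg h1, dif_neg h2, dif_neg (by omega)]
      congr 1; omega

lemma isWordOf_of_ray {X : Set (ℤ → A)} (hσ : shiftMap '' X = X)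
    {y : ℤ → A} (hy : y ∈ X) {z : ℕ → A} {s : List A}
    (h : ∀ m : ℕ, y (-((m : ℤ) + 1)) = rayAppend z s m) : IsWordOf X s := by
  refine ⟨fun i => y (i + -(s.length : ℤ)), translate_mem hσ _ hy, fun k => ?_⟩
  have hk : (k : ℕ) < s.length := k.2
  have hm : s.length - 1 - (k : ℕ) < s.length := by omega
  have h1 := h (s.length - 1 - (k : ℕ))
  rw [show -(((s.length - 1 - (k : ℕ) : ℕ) : ℤ) + 1) = 0 + (k : ℕ) + -(s.length : ℤ) by
    omega] at h1
  show y (0 + (k : ℕ) + -(s.length : ℤ)) = s.get k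
  rw [h1]
  simp only [rayAppend, dif_pos hm, List.get_eq_getElem]
  rw [List.getElem_reverse (by simpa using hm)]
  congr 1; omega

lemma exists_ray_ending_in_word {X : Set (ℤ → A)} (hσ : shiftMap '' X = X)
    {u : List A} (hu : IsWordOf X u) :
    ∃ z₀ : ℕ → A, IsLeftRay X (rayAppend z₀ u) := by
  obtain ⟨x, hx, hocc⟩ := hu
  refine ⟨fun m => x (-((m : ℤ) + 1)), fun i => x (i + (u.length : ℤ)),
    translate_mem hσ _ hx, fun m => ?_⟩
  show x (-((m : ℤ) + 1) + u.length) = _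
  by_cases h1 : m < u.length
  · simp only [rayAppend, dif_pos h1, List.get_eq_getElem]
    rw [List.getElem_reverse (by simpa using h1)]
    have h2 := hocc ⟨u.length - 1 - m, by omega⟩
    simp only [List.get_eq_getElem] at h2
    rw [← h2]; congr 1; omega
  · simp only [rayAppend, dif_neg h1]
    congr 1; omega

end Aux

section Main
variable {A : Type*}

lemma backward_dir {X : Set (ℤ → A)} (hσ : shiftMap '' X = X) {P : List A → Prop}
    (H : ∀ z : ℕ → A, IsLeftRay X z → ∀ u : List A, IsWordOf X u →
      ∃ w : List A, P w ∧ IsLeftRay X (rayAppend (rayAppend z w) u)) :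
    ∀ u v : List A, IsWordOf X u → IsWordOf X v →
      ∃ w : List A, P w ∧ IsWordOf X (u ++ w ++ v) := by
  intro u v hu hv
  obtain ⟨z₀, hz₀⟩ := exists_ray_ending_in_word hσ hu
  obtain ⟨w, hPw, hray⟩ := H _ hz₀ v hv
  refine ⟨w, hPw, ?_⟩
  rw [rayAppend_rayAppend, rayAppend_rayAppend, ← List.append_assoc] at hray
  obtain ⟨y, hy, hyr⟩ := hray
  exact isWordOf_of_ray hσ hy hyr

lemma forward_dir [Fintype A] {X : Set (ℤ → A)} (hσ : shiftMap '' X = X)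
    (hcl : @IsClosed _ (seqTop A) X) {P : List A → Prop}
    (hPfin : {l : List A | P l}.Finite)
    (hspec : ∀ u v : List A, IsWordOf X u → IsWordOf X v →
      ∃ w : List A, P w ∧ IsWordOf X (u ++ w ++ v)) :
    ∀ z : ℕ → A, IsLeftRay X z → ∀ u : List A, IsWordOf X u →
      ∃ w : List A, P w ∧ IsLeftRay X (rayAppend (rayAppend z w) u) := by
  intro z hz u hu
  obtain ⟨x, hx, hxz⟩ := hz
  have hp : ∀ n : ℕ, IsWordOf X (List.ofFn (fun k : Fin n => x (-(n : ℤ) + (k : ℕ)))) := by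
    intro n
    refine isWordOf_of_occursAt hσ hx (i := -(n : ℤ)) (fun k => ?_)
    simp [List.get_ofFn, OccursAt]
  choose w hw1 hw2 using fun n => hspec _ u (hp n) hu
  haveI : Finite ↥{l : List A | P l} := hPfin.to_subtype
  obtain ⟨y0, hy0⟩ := Finite.exists_infinite_fiber
    (fun n : ℕ => (⟨w n, hw1 n⟩ : {l : List A | P l}))
  have hinf : ((fun n : ℕ => (⟨w n, hw1 n⟩ : {l : List A | P l})) ⁻¹' {y0}).Infinite :=
    Set.infinite_coe_iff.mp hy0
  refine ⟨y0.1, y0.2, ?_⟩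
  rw [rayAppend_rayAppend]
  set s : List A := y0.1 ++ u with hs
  refine exists_point_of_finite_approx hcl _ (fun M => ?_)
  obtain ⟨n, hn_mem, hnM⟩ := hinf.exists_gt M
  have hwn : w n = y0.1 := congrArg Subtype.val (Set.mem_singleton_iff.mp hn_mem)
  obtain ⟨y₁, hy₁X, hocc⟩ := hw2 n
  rw [hwn, List.append_assoc] at hocc
  -- hocc : OccursAt y₁ (List.ofFn _ ++ s) 0
  set L : ℕ := n + s.length with hL
  have hlen : (List.ofFn (fun k : Fin n => x (-(n : ℤ) + (k : ℕ))) ++ s).length = L := by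
    simp [hL]
  refine ⟨fun i => y₁ (i + (L : ℤ)), translate_mem hσ _ hy₁X, fun m hm => ?_⟩
  have hmL : m < L := by omega
  have hkL : L - 1 - m < L := by omega
  have h1 := hocc ⟨L - 1 - m, by rw [hlen]; omega⟩
  simp only [List.get_eq_getElem] at h1
  rw [show (0 : ℤ) + ((L - 1 - m : ℕ) : ℤ) = -((m : ℤ) + 1) + (L : ℤ) by omega] at h1
  show y₁ (-((m : ℤ) + 1) + (L : ℤ)) = rayAppend z s m
  rw [h1]
  by_cases h2 : m < s.length
  · rw [List.getElem_append_right (by simp; omega)]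
    simp only [rayAppend, dif_pos h2, List.get_eq_getElem]
    rw [List.getElem_reverse (by simpa using h2)]
    congr 1
    simp only [List.length_ofFn]
    omega
  · rw [List.getElem_append_left (by simp; omega)]
    simp only [rayAppend, dif_neg h2]
    rw [List.getElem_ofFn]
    rw [← hxz (m - s.length)]
    congr 1
    simp only [Fin.val_mk]
    omega

end Main

/-- Characterization of the (almost) specification property
in terms of left rays. -/
theorem specification_and_almostSpecified_via_leftRays
    {A : Type*} [Fintype A] (X : Set (ℤ → A)) (hX : IsShiftSpace X) :
    (HasSpecification X ↔
      ∃ N : ℕ, ∀ z : ℕ → A, IsLeftRay X z → ∀ u : List A, IsWordOf X u →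
        ∃ w : List A, w.length = N ∧ IsLeftRay X (rayAppend (rayAppend z w) u)) ∧
    (AlmostSpecified X ↔
      ∃ N : ℕ, ∀ z : ℕ → A, IsLeftRay X z → ∀ u : List A, IsWordOf X u →
        ∃ w : List A, w.length ≤ N ∧ IsLeftRay X (rayAppend (rayAppend z w) u)) := by
  obtain ⟨-, hcl, hσ⟩ := hX
  constructor
  · constructor
    · rintro ⟨N, hN⟩
      exact ⟨N, forward_dir hσ hcl (List.finite_length_eq A N) hN⟩
    · rintro ⟨N, hN⟩
      exact ⟨N, backward_dir hσ hN⟩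
  · constructor
    · rintro ⟨N, hN⟩
      exact ⟨N, forward_dir hσ hcl (List.finite_length_le A N) hN⟩
    · rintro ⟨N, hN⟩
      exact ⟨N, backward_dir hσ hN⟩
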